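/- In the NV-risk model with $x^a = 0$ and $x^v = \frac{k}{(h-1)kq+k+1}$, the total derivative of the vaxxer cumulative infection with respect to homophily is $\frac{dCI^v}{dh} = -\frac{kq(k(h^2(q-1)+2h(\mu-q)-\mu^2+q)+\mu-1)}{2(\mu^2((h-1)kq+k+1) - \mu((h-1)hkq+hk+h+1)+(h-1)hkq+h)^2}$, which is strictly positive whenever $k > \frac{\mu-1}{\mu^2 - 2h\mu + h^2(1-q) + 2hq - q}$ (and the latter denominator is positive). -/

import Mathlib

private lemma hasDerivAt_quad (a b c x : ℝ) :
    HasDerivAt (fun y : ℝ => a + b*y + c*y^2) (b + 2*c*x) x := by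
  have h1 : HasDerivAt (fun y : ℝ => y) 1 x := hasDerivAt_id x
  have h2 : HasDerivAt (fun y : ℝ => y^2) (2*x) x := by
    simpa using hasDerivAt_pow 2 x
  have H : HasDerivAt (fun y : ℝ => a + (b*y + c*y^2)) (b*1 + c*(2*x)) x :=
    (((h1.const_mul b).add (h2.const_mul c)).const_add a)
  have hfun : (fun y : ℝ => a + b*y + c*y^2) = fun y => a + (b*y + c*y^2) := by
    funext y; ring
  rw [hfun]
  convert H using 1
  ring

set_option maxHeartbeats 2000000 in
/-- In the NV-risk model with `xa = 0` and
`xv(h) = k/((h-1)kq+k+1)` (symmetric initial infection, normalized `ρ₀ = 1`),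
the total derivative of the vaxxer cumulative infection w.r.t. homophily is
`dCIᵛ/dh = -(kq(k(h²(q-1)+2h(μ-q)-μ²+q)+μ-1)) /
  (2(μ²((h-1)kq+k+1) - μ((h-1)hkq+hk+h+1)+(h-1)hkq+h)²)`,
which is strictly positive whenever
`k > (μ-1)/(μ² - 2hμ + h²(1-q) + 2hq - q)` and the latter denominator is
positive. -/
theorem stmt_16 (k q μ : ℝ) (hk : 0 < k)
    (hq : q ∈ Set.Ioo (0:ℝ) 1)
    (xv qa qv T Δ μhat CIv : ℝ → ℝ)
    (hxv : ∀ h, xv h = k / ((h-1)*k*q + k + 1))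
    (hqa : ∀ h, qa h = h + (1-h)*q) (hqv : ∀ h, qv h = h + (1-h)*(1-q))
    (hT : ∀ h, T h = qa h * 1 + qv h * (1 - xv h))
    (hΔ : ∀ h, Δ h = Real.sqrt ((T h)^2 - 4*h*1*(1 - xv h)))
    (hμhat : ∀ h, μhat h = (T h + Δ h)/2)
    (hCIv : ∀ h, CIv h =
      2*((1 - xv h)*(1 - qv h) + (μ - qa h))
        / ((T h - 2*μ - Δ h) * (T h - 2*μ + Δ h))) :
    ∀ h ∈ Set.Ico (0:ℝ) 1, k*q*(1-h) < 1 → μhat h < μ →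
      deriv CIv h
        = -(k*q*(k*(h^2*(q-1) + 2*h*(μ-q) - μ^2 + q) + μ - 1))
          / (2*(μ^2*((h-1)*k*q + k + 1) - μ*((h-1)*h*k*q + h*k + h + 1)
              + (h-1)*h*k*q + h)^2)
      ∧ (0 < μ^2 - 2*h*μ + h^2*(1-q) + 2*h*q - q →
          k > (μ-1)/(μ^2 - 2*h*μ + h^2*(1-q) + 2*h*q - q) →
          0 < deriv CIv h) := by
  obtain ⟨hq0, hq1⟩ := hq
  intro h hh hkq hμ
  obtain ⟨hh0, hh1⟩ := hh
  -- coefficients of the quadratic numerator N and denominator-core E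
  set n0 : ℝ := 2*μ + 2*k*μ - 2*k*q - 2*k*q*μ with hn0
  set n1 : ℝ := -2 - 2*k + 4*k*q + 2*k*q*μ with hn1
  set n2 : ℝ := -2*k*q with hn2
  set e0 : ℝ := μ^2 + k*μ^2 - k*q*μ^2 - μ with he0
  set e1 : ℝ := 1 - μ - k*μ - k*q + k*q*μ + k*q*μ^2 with he1
  set e2 : ℝ := k*q - k*q*μ with he2
  -- basic facts at points with 0 < (x-1)*k*q + 1
  have hbasic : ∀ x : ℝ, 0 < (x-1)*k*q + 1 →
      0 < (x-1)*k*q + k + 1 ∧ 0 ≤ 1 - xv x ∧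
      0 ≤ (T x)^2 - 4*x*1*(1 - xv x) := by
    intro x hx
    have hP : 0 < (x-1)*k*q + k + 1 := by linarith
    have hs : 0 ≤ 1 - xv x := by
      rw [hxv]
      have : k / ((x-1)*k*q + k + 1) ≤ 1 := by
        rw [div_le_one hP]; linarith
      linarith
    refine ⟨hP, hs, ?_⟩
    have hid : (T x)^2 - 4*x*1*(1 - xv x)
        = (qa x - qv x * (1 - xv x))^2 + 4*(1 - xv x)*(1-x)^2*q*(1-q) := by
      rw [hT, hqa, hqv]; ring
    have t1 : 0 ≤ (qa x - qv x * (1 - xv x))^2 := sq_nonneg _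
    have t2 : 0 ≤ 4*(1 - xv x)*(1-x)^2*q*(1-q) := by
      have : 0 ≤ ((4*(1 - xv x))*(1-x)^2)*q := by
        apply mul_nonneg (mul_nonneg (by linarith) (sq_nonneg _)) hq0.le
      have h1q : (0:ℝ) ≤ 1 - q := by linarith
      calc (0:ℝ) ≤ ((4*(1 - xv x))*(1-x)^2)*q * (1-q) := mul_nonneg this h1q
        _ = 4*(1 - xv x)*(1-x)^2*q*(1-q) := by ring
    rw [hid]; linarith
  have hkq1 : 0 < (h-1)*k*q + 1 := by nlinarith
  obtain ⟨hPh, hsh, hdisch⟩ := hbasic h hkq1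
  -- the factorization of E at a point
  have hEfac : ∀ x : ℝ, 0 < (x-1)*k*q + 1 →
      e0 + e1*x + e2*x^2
        = ((x-1)*k*q + k + 1) * (μ^2 - μ * T x + x*(1 - xv x)) := by
    intro x hx
    have hP : ((x-1)*k*q + k + 1) ≠ 0 := ne_of_gt (by linarith)
    rw [hT, hqa, hqv, hxv, he0, he1, he2]
    linear_combination (x - μ*(x + (1-x)*(1-q))) * div_mul_cancel₀ k hP
  -- Δ facts at h
  have hΔsqh : (Δ h)^2 = (T h)^2 - 4*h*1*(1 - xv h) := by
    rw [hΔ]; exact Real.sq_sqrt hdisch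
  have hΔ0h : 0 ≤ Δ h := by rw [hΔ]; exact Real.sqrt_nonneg _
  have hμT : T h + Δ h < 2*μ := by
    have := hμ; rw [hμhat] at this; linarith
  -- positivity of E at h
  have hEh : 0 < e0 + e1*h + e2*h^2 := by
    rw [hEfac h hkq1]
    have hcore : 0 < μ^2 - μ * T h + h*(1 - xv h) := by
      nlinarith [hΔsqh, hΔ0h, hμT]
    exact mul_pos hPh hcore
  -- the open set where CIv agrees with the rational function
  set U : Set ℝ := {x | 0 < (x-1)*k*q + 1 ∧ 0 < e0 + e1*x + e2*x^2} with hU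
  have hUopen : IsOpen U := by
    have hUeq : U = {x : ℝ | 0 < (x-1)*k*q + 1} ∩ {x : ℝ | 0 < e0 + e1*x + e2*x^2} := rfl
    rw [hUeq]
    have c1 : Continuous fun x : ℝ => (x-1)*k*q + 1 := by continuity
    have c2 : Continuous fun x : ℝ => e0 + e1*x + e2*x^2 := by continuity
    exact (isOpen_lt continuous_const c1).inter (isOpen_lt continuous_const c2)
  have hhU : h ∈ U := ⟨hkq1, hEh⟩
  -- CIv agrees with N/(4E) on U
  have hagree : ∀ x ∈ U, CIv x = (n0 + n1*x + n2*x^2) / (4*(e0 + e1*x + e2*x^2)) := by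
    intro x hxU
    obtain ⟨hx1, hxE⟩ := hxU
    obtain ⟨hP, hs, hdisc⟩ := hbasic x hx1
    have hΔsq : (Δ x)^2 = (T x)^2 - 4*x*1*(1 - xv x) := by
      rw [hΔ]; exact Real.sq_sqrt hdisc
    have hEf := hEfac x hx1
    have hden : (T x - 2*μ - Δ x) * (T x - 2*μ + Δ x)
        = 4*(e0 + e1*x + e2*x^2) / ((x-1)*k*q + k + 1) := by
      have hexp : (T x - 2*μ - Δ x) * (T x - 2*μ + Δ x)
          = 4*(μ^2 - μ * T x + x*(1 - xv x)) := by
        have expand : (T x - 2*μ - Δ x) * (T x - 2*μ + Δ x)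
            = (T x - 2*μ)^2 - (Δ x)^2 := by ring
        rw [expand, hΔsq]; ring
      rw [hexp, hEf, eq_div_iff (ne_of_gt hP)]
      ring
    have hnum : 2*((1 - xv x)*(1 - qv x) + (μ - qa x)) * ((x-1)*k*q + k + 1)
        = n0 + n1*x + n2*x^2 := by
      rw [hqa, hqv, hxv, hn0, hn1, hn2]
      linear_combination (-2*(1 - (x + (1-x)*(1-q)))) * div_mul_cancel₀ k (ne_of_gt hP)
    rw [hCIv, hden, div_div_eq_mul_div, hnum]
  -- derivative of the rational function
  have hNder : HasDerivAt (fun y : ℝ => n0 + n1*y + n2*y^2) (n1 + 2*n2*h) h :=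
    hasDerivAt_quad n0 n1 n2 h
  have hEder : HasDerivAt (fun y : ℝ => 4*(e0 + e1*y + e2*y^2)) (4*(e1 + 2*e2*h)) h := by
    have := (hasDerivAt_quad e0 e1 e2 h).const_mul 4
    simpa [mul_comm] using this
  have hEne : (4*(e0 + e1*h + e2*h^2)) ≠ 0 := ne_of_gt (by linarith)
  have hGder : HasDerivAt (fun y : ℝ => (n0 + n1*y + n2*y^2) / (4*(e0 + e1*y + e2*y^2)))
      (((n1 + 2*n2*h) * (4*(e0 + e1*h + e2*h^2))
        - (n0 + n1*h + n2*h^2) * (4*(e1 + 2*e2*h))) / (4*(e0 + e1*h + e2*h^2))^2) h :=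
    hNder.div hEder hEne
  have hderiv_eq : deriv CIv h
      = (((n1 + 2*n2*h) * (4*(e0 + e1*h + e2*h^2))
        - (n0 + n1*h + n2*h^2) * (4*(e1 + 2*e2*h))) / (4*(e0 + e1*h + e2*h^2))^2) := by
    have heq : CIv =ᶠ[nhds h] fun y => (n0 + n1*y + n2*y^2) / (4*(e0 + e1*y + e2*y^2)) :=
      Filter.eventuallyEq_of_mem (hUopen.mem_nhds hhU) hagree
    rw [heq.deriv_eq, hGder.deriv]
  -- identify E with the statement's expression
  have hEstmt : μ^2*((h-1)*k*q + k + 1) - μ*((h-1)*h*k*q + h*k + h + 1)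
      + (h-1)*h*k*q + h = e0 + e1*h + e2*h^2 := by
    rw [he0, he1, he2]; ring
  have hmain : deriv CIv h
      = -(k*q*(k*(h^2*(q-1) + 2*h*(μ-q) - μ^2 + q) + μ - 1))
        / (2*(μ^2*((h-1)*k*q + k + 1) - μ*((h-1)*h*k*q + h*k + h + 1)
            + (h-1)*h*k*q + h)^2) := by
    rw [hderiv_eq, hEstmt]
    rw [div_eq_div_iff
      (ne_of_gt (pow_pos (by linarith : (0:ℝ) < 4*(e0 + e1*h + e2*h^2)) 2))
      (ne_of_gt (by nlinarith [sq_nonneg (e0 + e1*h + e2*h^2), hEh] :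
        (0:ℝ) < 2*(e0 + e1*h + e2*h^2)^2))]
    rw [hn0, hn1, hn2, he0, he1, he2]
    ring
  refine ⟨hmain, ?_⟩
  intro hDk hkgt
  rw [hmain]
  have hkDk : μ - 1 < k * (μ^2 - 2*h*μ + h^2*(1-q) + 2*h*q - q) := by
    rw [gt_iff_lt, div_lt_iff₀ hDk] at hkgt
    linarith
  have hZ : k*(h^2*(q-1) + 2*h*(μ-q) - μ^2 + q) + μ - 1 < 0 := by nlinarith
  have hkq0 : 0 < k*q := mul_pos hk hq0
  have hnum : 0 < -(k*q*(k*(h^2*(q-1) + 2*h*(μ-q) - μ^2 + q) + μ - 1)) := by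
    nlinarith [mul_pos hkq0 (neg_pos.2 hZ)]
  have hden : 0 < 2*(μ^2*((h-1)*k*q + k + 1) - μ*((h-1)*h*k*q + h*k + h + 1)
      + (h-1)*h*k*q + h)^2 := by
    rw [hEstmt]
    nlinarith [sq_nonneg (e0 + e1*h + e2*h^2)]
  exact div_pos hnum hden
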